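/- Let R be a residuated lattice with bottom ⊥ and top ⊤, ⊥ ≠ ⊤, such that distinct elements of G := R \ {⊥, ⊤} satisfy x ∨ y = ⊤ and x ∧ y = ⊥, multiplication is commutative, G is closed under multiplication and every element of G is invertible (so G is an abelian group), and ⊤·x = ⊤ for all x ≠ ⊥. Then for every finite subset B of R there exist a finite residuated lattice C with the same properties (bounded with distinct bounds, commutative, whose non-bound elements form an abelian group and are pairwise incomparable, with top absorbing on non-bottom elements) and an injective map f : B → C that preserves each of the operations ∧, ∨, ·, \ and the constant 1 whenever the arguments and the result of the operation all lie in B; that is, every finite partial subalgebra of R embeds into a finite algebra of the same kind. -/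

import Mathlib

/-- A bounded commutative residuated lattice whose non-bound elements are pairwise
incomparable, closed under multiplication, all invertible (i.e. form an abelian group),
and whose top is absorbing on non-bottom elements. -/
class MGAlgebra (C : Type*) extends Lattice C, BoundedOrder C, Monoid C where
  ld : C → C → C
  rd : C → C → C
  resl : ∀ x y z : C, x * y ≤ z ↔ y ≤ ld x z
  resr : ∀ x y z : C, x * y ≤ z ↔ x ≤ rd z y
  bot_ne_top : (⊥ : C) ≠ ⊤
  mul_comm' : ∀ x y : C, x * y = y * x
  unilinear : ∀ x y : C, x ≠ ⊥ → x ≠ ⊤ → y ≠ ⊥ → y ≠ ⊤ → x ≠ y → x ⊔ y = ⊤ ∧ x ⊓ y = ⊥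
  mul_closed : ∀ x y : C, x ≠ ⊥ → x ≠ ⊤ → y ≠ ⊥ → y ≠ ⊤ → x * y ≠ ⊥ ∧ x * y ≠ ⊤
  invertible : ∀ x : C, x ≠ ⊥ → x ≠ ⊤ → ∃ y : C, y ≠ ⊥ ∧ y ≠ ⊤ ∧ x * y = 1
  top_absorb : ∀ x : C, x ≠ ⊥ → ⊤ * x = ⊤

inductive MG (H : Type) : Type
  | bot : MG H
  | top : MG H
  | of (a : H) : MG H

namespace MG

variable {H : Type} [CommGroup H]

def le : MG H → MG H → Prop
  | .bot, _ => True
  | _, .top => True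
  | .of a, .of b => a = b
  | _, _ => False

open Classical in
noncomputable def sup : MG H → MG H → MG H
  | .bot, x => x
  | x, .bot => x
  | .top, _ => .top
  | _, .top => .top
  | .of a, .of b => if a = b then .of a else .top

open Classical in
noncomputable def inf : MG H → MG H → MG H
  | .top, x => x
  | x, .top => x
  | .bot, _ => .bot
  | _, .bot => .bot
  | .of a, .of b => if a = b then .of a else .bot

def mul : MG H → MG H → MG H
  | .bot, _ => .bot
  | _, .bot => .bot
  | .top, _ => .top
  | _, .top => .top
  | .of a, .of b => .of (a * b)

def ld : MG H → MG H → MG H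
  | .bot, _ => .top
  | .top, .top => .top
  | .top, _ => .bot
  | .of _, .top => .top
  | .of _, .bot => .bot
  | .of a, .of b => .of (a⁻¹ * b)

lemma le_refl_aux (x : MG H) : le x x := by cases x <;> simp [le]

lemma le_trans_aux (x y z : MG H) (h1 : le x y) (h2 : le y z) : le x z := by
  cases x <;> cases y <;> cases z <;> simp_all [le]

lemma le_antisymm_aux (x y : MG H) (h1 : le x y) (h2 : le y x) : x = y := by
  cases x <;> cases y <;> simp_all [le]

lemma le_sup_left_aux (x y : MG H) : le x (sup x y) := by
  cases x <;> cases y <;> simp only [sup] <;> (try split_ifs) <;> simp_all [le]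

lemma le_sup_right_aux (x y : MG H) : le y (sup x y) := by
  cases x <;> cases y <;> simp only [sup] <;> (try split_ifs) <;> simp_all [le]

lemma sup_le_aux (x y z : MG H) (h1 : le x z) (h2 : le y z) : le (sup x y) z := by
  cases x <;> cases y <;> cases z <;> simp only [sup] <;> (try split_ifs) <;> simp_all [le]

lemma inf_le_left_aux (x y : MG H) : le (inf x y) x := by
  cases x <;> cases y <;> simp only [inf] <;> (try split_ifs) <;> simp_all [le]

lemma inf_le_right_aux (x y : MG H) : le (inf x y) y := by
  cases x <;> cases y <;> simp only [inf] <;> (try split_ifs) <;> simp_all [le]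

lemma le_inf_aux (x y z : MG H) (h1 : le x y) (h2 : le x z) : le x (inf y z) := by
  cases x <;> cases y <;> cases z <;> simp only [inf] <;> (try split_ifs) <;> simp_all [le]

lemma bot_le_aux (x : MG H) : le .bot x := by cases x <;> simp [le]

lemma le_top_aux (x : MG H) : le x .top := by cases x <;> simp [le]

lemma mul_assoc_aux (x y z : MG H) : mul (mul x y) z = mul x (mul y z) := by
  cases x <;> cases y <;> cases z <;> simp [mul, mul_assoc]

lemma one_mul_aux (x : MG H) : mul (.of 1) x = x := by cases x <;> simp [mul]

lemma mul_one_aux (x : MG H) : mul x (.of 1) = x := by cases x <;> simp [mul]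

lemma mul_comm_aux (x y : MG H) : mul x y = mul y x := by
  cases x <;> cases y <;> simp [mul, mul_comm]

lemma resl_aux (x y z : MG H) : le (mul x y) z ↔ le y (ld x z) := by
  cases x <;> cases y <;> cases z <;> simp [mul, le, ld, eq_inv_mul_iff_mul_eq]

lemma unilinear_aux (x y : MG H) (hx1 : x ≠ .bot) (hx2 : x ≠ .top) (hy1 : y ≠ .bot)
    (hy2 : y ≠ .top) (hxy : x ≠ y) : sup x y = .top ∧ inf x y = .bot := by
  cases x <;> cases y <;> simp_all [sup, inf] <;> (try split_ifs) <;> simp_all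

lemma mul_closed_aux (x y : MG H) (hx1 : x ≠ .bot) (hx2 : x ≠ .top) (hy1 : y ≠ .bot)
    (hy2 : y ≠ .top) : mul x y ≠ .bot ∧ mul x y ≠ .top := by
  cases x <;> cases y <;> simp_all [mul]

lemma invertible_aux (x : MG H) (hx1 : x ≠ .bot) (hx2 : x ≠ .top) :
    ∃ y : MG H, y ≠ .bot ∧ y ≠ .top ∧ mul x y = .of 1 := by
  cases x with
  | bot => simp at hx1
  | top => simp at hx2
  | of a => exact ⟨.of a⁻¹, by simp, by simp, by simp [mul]⟩

lemma top_absorb_aux (x : MG H) (hx : x ≠ .bot) : mul .top x = .top := by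
  cases x <;> simp_all [mul]

noncomputable instance instLattice : Lattice (MG H) where
  le := le
  le_refl := le_refl_aux
  le_trans := le_trans_aux
  le_antisymm := le_antisymm_aux
  sup := sup
  inf := inf
  le_sup_left := le_sup_left_aux
  le_sup_right := le_sup_right_aux
  sup_le := sup_le_aux
  inf_le_left := inf_le_left_aux
  inf_le_right := inf_le_right_aux
  le_inf := le_inf_aux

instance instBoundedOrder : BoundedOrder (MG H) where
  bot := .bot
  top := .top
  bot_le := bot_le_aux
  le_top := le_top_aux

instance instMonoid : Monoid (MG H) where
  mul := mul
  one := .of 1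
  mul_assoc := mul_assoc_aux
  one_mul := one_mul_aux
  mul_one := mul_one_aux

@[simp] lemma bot_def : (⊥ : MG H) = .bot := rfl
@[simp] lemma top_def : (⊤ : MG H) = .top := rfl
@[simp] lemma one_def : (1 : MG H) = .of 1 := rfl
lemma mul_def (x y : MG H) : x * y = mul x y := rfl
lemma le_def (x y : MG H) : x ≤ y ↔ le x y := Iff.rfl
lemma sup_def (x y : MG H) : x ⊔ y = sup x y := rfl
lemma inf_def (x y : MG H) : x ⊓ y = inf x y := rfl

noncomputable instance instMGAlgebra : MGAlgebra (MG H) where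
  ld := ld
  rd := fun z y => ld y z
  resl := resl_aux
  resr := fun x y z => by
    rw [le_def, le_def, mul_def, mul_comm_aux x y]
    exact resl_aux y x z
  bot_ne_top := by simp
  mul_comm' := mul_comm_aux
  unilinear := fun x y h1 h2 h3 h4 h5 => by
    rw [sup_def, inf_def]
    exact unilinear_aux x y (by simpa using h1) (by simpa using h2)
      (by simpa using h3) (by simpa using h4) h5
  mul_closed := fun x y h1 h2 h3 h4 => by
    rw [mul_def]; simp only [bot_def, top_def]
    exact mul_closed_aux x y (by simpa using h1) (by simpa using h2)
      (by simpa using h3) (by simpa using h4)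
  invertible := fun x h1 h2 => by
    obtain ⟨y, hy1, hy2, hy3⟩ := invertible_aux x (by simpa using h1) (by simpa using h2)
    exact ⟨y, by simpa using hy1, by simpa using hy2, by rw [mul_def, hy3, one_def]⟩
  top_absorb := fun x h => by
    rw [mul_def, top_def]
    exact top_absorb_aux x (by simpa using h)

def toOpt : MG H → H ⊕ Bool
  | .bot => Sum.inr false
  | .top => Sum.inr true
  | .of a => Sum.inl a

lemma finite_mg [Finite H] : Finite (MG H) := by
  have hinj : Function.Injective (toOpt (H := H)) := by
    intro x y h
    cases x <;> cases y <;> simp_all [toOpt]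
  exact Finite.of_injective _ hinj

lemma ld_def (x y : MG H) : MGAlgebra.ld x y = ld x y := rfl

@[simp] lemma inf_bot_left (z : MG H) : inf .bot z = .bot := by cases z <;> rfl
@[simp] lemma inf_bot_right (z : MG H) : inf z .bot = .bot := by cases z <;> rfl
@[simp] lemma inf_top_left (z : MG H) : inf .top z = z := by cases z <;> rfl
@[simp] lemma inf_top_right (z : MG H) : inf z .top = z := by cases z <;> rfl
@[simp] lemma sup_bot_left (z : MG H) : sup .bot z = z := by cases z <;> rfl
@[simp] lemma sup_bot_right (z : MG H) : sup z .bot = z := by cases z <;> rfl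
@[simp] lemma sup_top_left (z : MG H) : sup .top z = .top := by cases z <;> rfl
@[simp] lemma sup_top_right (z : MG H) : sup z .top = .top := by cases z <;> rfl
open Classical in
lemma inf_of_of (a b : H) : inf (.of a) (.of b) = if a = b then .of a else .bot := rfl
open Classical in
lemma sup_of_of (a b : H) : sup (.of a) (.of b) = if a = b then .of a else .top := rfl
@[simp] lemma mul_bot_left (z : MG H) : mul .bot z = .bot := by cases z <;> rfl
@[simp] lemma mul_bot_right (z : MG H) : mul z .bot = .bot := by cases z <;> rfl
lemma mul_top_left {z : MG H} (h : z ≠ .bot) : mul .top z = .top := by cases z <;> simp_all [mul]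
lemma mul_top_right {z : MG H} (h : z ≠ .bot) : mul z .top = .top := by cases z <;> simp_all [mul]
lemma mul_of_of (a b : H) : mul (.of a) (.of b) = .of (a * b) := rfl
@[simp] lemma ld_bot (z : MG H) : ld .bot z = .top := by cases z <;> rfl
@[simp] lemma ld_any_top (z : MG H) : ld z .top = .top := by cases z <;> rfl
@[simp] lemma ld_top_of (a : H) : ld .top (.of a) = .bot := rfl
@[simp] lemma ld_top_bot : ld (.top : MG H) .bot = .bot := rfl
@[simp] lemma ld_of_bot (a : H) : ld (.of a) .bot = .bot := rfl
lemma ld_of_of (a b : H) : ld (.of a) (.of b) = .of (a⁻¹ * b) := rfl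

end MG

open AddSubgroup in
theorem fepAb {G : Type*} [CommGroup G] (S : Set G) (hS : S.Finite) :
    ∃ (H : Type) (_ : CommGroup H) (_ : Finite H) (φ : G → H),
      Set.InjOn φ S ∧ (∀ a ∈ S, ∀ b ∈ S, a * b ∈ S → φ (a * b) = φ a * φ b) ∧ φ 1 = 1 := by
  classical
  haveI : Fintype S := hS.fintype
  -- characters separating each pair
  have hchar : ∀ p : S × S, ∃ c : CharacterModule (Additive G),
      ((p.1 : G) ≠ (p.2 : G) → c (Additive.ofMul (p.1 : G)) ≠ c (Additive.ofMul (p.2 : G))) := by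
    intro p
    by_cases hne : (p.1 : G) ≠ (p.2 : G)
    · have h0 : Additive.ofMul ((p.1 : G) * (p.2 : G)⁻¹) ≠ 0 := by
        intro h
        exact hne (mul_inv_eq_one.mp h)
      obtain ⟨c, hc⟩ := CharacterModule.exists_character_apply_ne_zero_of_ne_zero h0
      refine ⟨c, fun _ hceq => hc ?_⟩
      have h2 : Additive.ofMul ((p.1:G) * (p.2:G)⁻¹)
          = Additive.ofMul (p.1:G) - Additive.ofMul (p.2:G) := by
        simp [sub_eq_add_neg]
      rw [h2, map_sub, hceq, sub_self]
    · exact ⟨0, fun h => absurd h hne⟩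
  choose c hc using hchar
  -- all elements of AddCircle (1 : ℚ) are torsion
  have htor : ∀ v : AddCircle (1:ℚ), IsOfFinAddOrder v := by
    intro v
    obtain ⟨q, rfl⟩ := QuotientAddGroup.mk_surjective v
    have h : addOrderOf ((q : ℚ) : AddCircle (1:ℚ)) = q.den := by
      simpa using AddCircle.addOrderOf_coe_rat (p := (1:ℚ)) (q := q)
    rw [← addOrderOf_pos_iff, h]; exact q.pos
  -- the common exponent
  set N : ℕ := ∏ pa : (S × S) × S, addOrderOf (c pa.1 (Additive.ofMul (pa.2 : G))) with hN
  have hNpos : 0 < N := by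
    apply Finset.prod_pos
    intro pa _
    exact addOrderOf_pos_iff.mpr (htor _)
  have hNsmul : ∀ (p : S × S) (a : S), N • (c p (Additive.ofMul (a : G))) = 0 := by
    intro p a
    have hdvd : addOrderOf (c p (Additive.ofMul (a : G))) ∣ N :=
      Finset.dvd_prod_of_mem _ (Finset.mem_univ ((p, a) : (S × S) × S))
    exact addOrderOf_dvd_iff_nsmul_eq_zero.mp hdvd
  -- the finite cyclic subgroup of AddCircle containing all N-torsion
  set v0 : AddCircle (1:ℚ) := (↑(1 / (N:ℚ)) : AddCircle (1:ℚ)) with hv0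
  have hmem : ∀ u : AddCircle (1:ℚ), N • u = 0 → u ∈ zmultiples v0 := by
    intro u hu
    obtain ⟨q, rfl⟩ := QuotientAddGroup.mk_surjective u
    have h1 : (((N:ℚ) * q : ℚ) : AddCircle (1:ℚ)) = 0 := by
      rw [← hu]
      rw [← AddCircle.coe_nsmul]
      norm_num [nsmul_eq_mul]
    obtain ⟨m, hm⟩ := (AddCircle.coe_eq_zero_iff _).mp h1
    have hm' : (m : ℚ) = (N:ℚ) * q := by simpa using hm
    have hNne : (N:ℚ) ≠ 0 := by positivity
    have hq : q = (m:ℚ) / (N:ℚ) := by rw [eq_div_iff hNne]; linarith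
    refine mem_zmultiples_iff.mpr ⟨m, ?_⟩
    have hqq : (m : ℚ) • ((1 / (N:ℚ)) : ℚ) = q := by rw [hq, smul_eq_mul]; ring
    calc m • (v0 : AddCircle (1:ℚ)) = (((m : ℚ) • ((1 / (N:ℚ)) : ℚ) : ℚ) : AddCircle (1:ℚ)) := by
          rw [hv0, ← AddCircle.coe_zsmul]; norm_num
      _ = (q : AddCircle (1:ℚ)) := by rw [hqq]
  haveI hfin : Finite (zmultiples v0) := (htor v0).finite_zmultiples.to_subtype
  -- values of characters on S lie in the subgroup
  have hval : ∀ (p : S × S) (a : G), a ∈ S → c p (Additive.ofMul a) ∈ zmultiples v0 := by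
    intro p a ha
    exact hmem _ (hNsmul p ⟨a, ha⟩)
  -- build the map
  set k := Fintype.card (S × S) with hk
  set e := (Fintype.equivFin (S × S)).symm with he
  set θ : (S × S) → G → (zmultiples v0) := fun p x =>
    if h : c p (Additive.ofMul x) ∈ zmultiples v0 then ⟨_, h⟩ else 0 with hθ
  refine ⟨Multiplicative (Fin k → (zmultiples v0)), inferInstance, inferInstance,
    fun x => Multiplicative.ofAdd (fun j => θ (e j) x), ?_, ?_, ?_⟩
  · intro a ha b hb hab
    by_contra hne
    have hp := hc (⟨⟨a, ha⟩, ⟨b, hb⟩⟩ : S × S) hne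
    set p : S × S := ⟨⟨a, ha⟩, ⟨b, hb⟩⟩
    have hfun : (fun j => θ (e j) a) = (fun j => θ (e j) b) :=
      Multiplicative.ofAdd.injective hab
    have hj : θ p a = θ p b := by
      have := congrFun hfun (e.symm p)
      simpa [e.apply_symm_apply] using this
    rw [hθ] at hj
    simp only [dif_pos (hval p a ha), dif_pos (hval p b hb)] at hj
    exact hp (congrArg Subtype.val hj)
  · intro a ha b hb hab
    have : (fun j => θ (e j) (a * b)) = (fun j => θ (e j) a) + (fun j => θ (e j) b) := by
      funext j
      set p := e j
      have h1 := hval p a ha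
      have h2 := hval p b hb
      have h3 := hval p (a * b) hab
      simp only [θ, dif_pos h1, dif_pos h2, dif_pos h3, Pi.add_apply]
      have h1' : c (e j) (Additive.ofMul a) ∈ zmultiples v0 := h1
      have h2' : c (e j) (Additive.ofMul b) ∈ zmultiples v0 := h2
      ext
      simp [map_add, h1', h2']
      rfl
    simp only [this]
    exact congrArg Multiplicative.ofAdd this
  · have : (fun j => θ (e j) 1) = (0 : Fin k → (zmultiples v0)) := by
      funext j
      have h0 : c (e j) (Additive.ofMul (1:G)) ∈ zmultiples v0 := by
        simp only [ofMul_one, map_zero]; exact zero_mem _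
      simp only [θ, dif_pos h0]
      ext; simp
    show Multiplicative.ofAdd (fun j => θ (e j) 1) = 1
    rw [this]; rfl

namespace MGAlgebra

variable {R : Type*} [MGAlgebra R]

lemma mul_bot (x : R) : x * ⊥ = ⊥ :=
  le_antisymm ((resl x ⊥ ⊥).mpr bot_le) bot_le

lemma bot_mul (x : R) : ⊥ * x = ⊥ := by rw [mul_comm']; exact mul_bot x

lemma one_ne_bot : (1 : R) ≠ ⊥ := by
  intro h
  apply bot_ne_top (C := R)
  have : (⊤ : R) * 1 = ⊤ := mul_one ⊤
  rw [h, mul_bot] at this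
  exact this

lemma mul_top (x : R) (h : x ≠ ⊥) : x * ⊤ = ⊤ := by
  rw [mul_comm']; exact top_absorb x h

lemma mul_ne_bot (x y : R) (hx : x ≠ ⊥) (hy : y ≠ ⊥) : x * y ≠ ⊥ := by
  by_cases hx2 : x = ⊤
  · rw [hx2, top_absorb y hy]; exact (bot_ne_top (C := R)).symm
  by_cases hy2 : y = ⊤
  · rw [hy2, mul_top x hx]; exact (bot_ne_top (C := R)).symm
  exact (mul_closed x y hx hx2 hy hy2).1

lemma mul_ld_le (x z : R) : x * ld x z ≤ z := (resl x _ z).mpr le_rfl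

lemma ld_bot_left (z : R) : ld (⊥ : R) z = ⊤ := by
  apply top_unique
  exact (resl ⊥ ⊤ z).mp (by rw [bot_mul]; exact bot_le)

lemma ld_top_right (x : R) : ld x (⊤ : R) = ⊤ := by
  apply top_unique
  exact (resl x ⊤ ⊤).mp le_top

lemma ld_bot_right (x : R) (h : x ≠ ⊥) : ld x (⊥ : R) = ⊥ := by
  by_contra hne
  have h1 : x * ld x ⊥ = ⊥ := le_bot_iff.mp (mul_ld_le x ⊥)
  exact mul_ne_bot x _ h hne h1

lemma ld_top_left (z : R) (h : z ≠ ⊤) : ld (⊤ : R) z = ⊥ := by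
  by_contra hne
  have h1 : (⊤ : R) * ld ⊤ z ≤ z := mul_ld_le ⊤ z
  rw [top_absorb _ hne] at h1
  exact h (top_unique h1)

lemma le_of_G {x y : R} (hx1 : x ≠ ⊥) (hx2 : x ≠ ⊤) (hy1 : y ≠ ⊥) (hy2 : y ≠ ⊤)
    (hle : x ≤ y) : x = y := by
  by_contra hne
  have := (unilinear x y hx1 hx2 hy1 hy2 hne).1
  rw [sup_eq_right.mpr hle] at this
  exact hy2 this

lemma ld_G {x z i : R} (hx1 : x ≠ ⊥) (hx2 : x ≠ ⊤) (hz1 : z ≠ ⊥) (hz2 : z ≠ ⊤)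
    (hi1 : i ≠ ⊥) (hi2 : i ≠ ⊤) (hxi : x * i = 1) : ld x z = i * z := by
  obtain ⟨hiz1, hiz2⟩ := mul_closed i z hi1 hi2 hz1 hz2
  have h1 : i * z ≤ ld x z := by
    apply (resl x (i * z) z).mp
    rw [← mul_assoc, hxi, one_mul]
  have h2 : x * ld x z ≤ z := mul_ld_le x z
  by_cases hw1 : ld x z = ⊥
  · rw [hw1] at h1
    exact absurd (le_bot_iff.mp h1) hiz1
  by_cases hw2 : ld x z = ⊤
  · rw [hw2, mul_top x hx1] at h2
    exact absurd (top_unique h2) hz2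
  obtain ⟨hxw1, hxw2⟩ := mul_closed x (ld x z) hx1 hx2 hw1 hw2
  have h3 : x * ld x z = z := le_of_G hxw1 hxw2 hz1 hz2 h2
  calc ld x z = (i * x) * ld x z := by rw [mul_comm' i x, hxi, one_mul]
    _ = i * (x * ld x z) := mul_assoc _ _ _
    _ = i * z := by rw [h3]

lemma all_bot_or_top (h1 : (1 : R) = ⊤) (x : R) : x = ⊥ ∨ x = ⊤ := by
  by_cases hx : x = ⊥
  · exact Or.inl hx
  · right
    calc x = 1 * x := (one_mul x).symm
      _ = ⊤ * x := by rw [h1]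
      _ = ⊤ := top_absorb x hx

end MGAlgebra

noncomputable def boolMG : MGAlgebra Bool where
  toLattice := inferInstance
  toBoundedOrder := inferInstance
  toMonoid :=
    { mul := and
      one := true
      mul_assoc := by decide
      one_mul := by decide
      mul_one := by decide }
  ld := fun x z => !x || z
  rd := fun z y => !y || z
  resl := by decide
  resr := by decide
  bot_ne_top := by decide
  mul_comm' := by decide
  unilinear := by decide
  mul_closed := by decide
  invertible := by decide
  top_absorb := by decide


/-- `f` is an embedding of the partial subalgebra induced by `B` into `C`: it is injective
on `B` and preserves each operation whenever arguments and result lie in `B`. -/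
def IsPartialEmbedding {R C : Type*} [MGAlgebra R] [MGAlgebra C] (B : Set R) (f : R → C) :
    Prop :=
  Set.InjOn f B ∧
  (∀ x ∈ B, ∀ y ∈ B, x ⊓ y ∈ B → f (x ⊓ y) = f x ⊓ f y) ∧
  (∀ x ∈ B, ∀ y ∈ B, x ⊔ y ∈ B → f (x ⊔ y) = f x ⊔ f y) ∧
  (∀ x ∈ B, ∀ y ∈ B, x * y ∈ B → f (x * y) = f x * f y) ∧
  (∀ x ∈ B, ∀ y ∈ B, MGAlgebra.ld x y ∈ B → f (MGAlgebra.ld x y) = MGAlgebra.ld (f x) (f y)) ∧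
  ((1 : R) ∈ B → f 1 = 1)

open MGAlgebra in
noncomputable def gsGroup {R : Type*} [MGAlgebra R] (h1 : (1 : R) ≠ ⊤) :
    CommGroup {x : R // x ≠ ⊥ ∧ x ≠ ⊤} where
  mul a b := ⟨a.1 * b.1, mul_closed a.1 b.1 a.2.1 a.2.2 b.2.1 b.2.2⟩
  one := ⟨1, one_ne_bot, h1⟩
  mul_assoc a b c := Subtype.ext (mul_assoc a.1 b.1 c.1)
  one_mul a := Subtype.ext (one_mul a.1)
  mul_one a := Subtype.ext (mul_one a.1)
  inv a := ⟨(invertible a.1 a.2.1 a.2.2).choose,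
    (invertible a.1 a.2.1 a.2.2).choose_spec.1,
    (invertible a.1 a.2.1 a.2.2).choose_spec.2.1⟩
  inv_mul_cancel a := Subtype.ext (by
    show (invertible a.1 a.2.1 a.2.2).choose * a.1 = 1
    rw [MGAlgebra.mul_comm']
    exact (invertible a.1 a.2.1 a.2.2).choose_spec.2.2)
  mul_comm a b := Subtype.ext (mul_comm' a.1 b.1)

/-- The finite embeddability property for algebras of the above kind: every finite partial
subalgebra embeds into a finite algebra of the same kind. -/
theorem stmt_13 {R : Type*} [MGAlgebra R] (B : Set R) (hB : B.Finite) :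
    ∃ (C : Type) (instC : MGAlgebra C) (f : R → C),
      Finite C ∧ @IsPartialEmbedding R C _ instC B f := by
  classical
  by_cases h1 : (1 : R) = ⊤
  · -- degenerate two-element case
    have hall := MGAlgebra.all_bot_or_top h1
    refine ⟨Bool, boolMG, fun x => if x = ⊥ then false else true, inferInstance, ?_, ?_, ?_, ?_, ?_, ?_⟩
    · intro x hx y hy heq
      rcases hall x with rfl | rfl <;> rcases hall y with rfl | rfl <;>
        simp_all [MGAlgebra.bot_ne_top (C := R), (MGAlgebra.bot_ne_top (C := R)).symm]
    · intro x hx y hy _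
      rcases hall x with rfl | rfl <;> rcases hall y with rfl | rfl <;>
        simp [MGAlgebra.bot_ne_top (C := R), (MGAlgebra.bot_ne_top (C := R)).symm] <;> exact Bool.le_iff_imp.mpr (by decide)
    · intro x hx y hy _
      rcases hall x with rfl | rfl <;> rcases hall y with rfl | rfl <;>
        simp [MGAlgebra.bot_ne_top (C := R), (MGAlgebra.bot_ne_top (C := R)).symm] <;> exact Bool.le_iff_imp.mpr (by decide)
    · intro x hx y hy _
      rcases hall x with rfl | rfl <;> rcases hall y with rfl | rfl <;>
        simp [MGAlgebra.bot_mul, MGAlgebra.mul_bot,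
          MGAlgebra.top_absorb (⊤ : R) (MGAlgebra.bot_ne_top (C := R)).symm,
          MGAlgebra.bot_ne_top (C := R), (MGAlgebra.bot_ne_top (C := R)).symm] <;> rfl
    · intro x hx y hy _
      rcases hall x with rfl | rfl <;> rcases hall y with rfl | rfl <;>
        simp [MGAlgebra.ld_bot_left, MGAlgebra.ld_top_right,
          MGAlgebra.ld_bot_right (⊤ : R) (MGAlgebra.bot_ne_top (C := R)).symm,
          MGAlgebra.bot_ne_top (C := R), (MGAlgebra.bot_ne_top (C := R)).symm] <;> rfl
    · intro _
      rw [h1]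
      simp [(MGAlgebra.bot_ne_top (C := R)).symm]
      rfl
  · -- main case
    letI instG : CommGroup {x : R // x ≠ ⊥ ∧ x ≠ ⊤} := gsGroup h1
    set S : Set {x : R // x ≠ ⊥ ∧ x ≠ ⊤} := {a | (a : R) ∈ B} with hS
    have hSfin : S.Finite := hB.preimage (Set.injOn_of_injective Subtype.val_injective)
    obtain ⟨H, instH, finH, φ, hinj, hmulφ, honeφ⟩ := fepAb S hSfin
    letI := instH
    haveI : Finite H := finH
    set f : R → MG H := fun x =>
      if hb : x = ⊥ then .bot else if ht : x = ⊤ then .top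
      else .of (φ ⟨x, hb, ht⟩) with hf
    have hfbot : f ⊥ = .bot := by simp [hf]
    have htb : (⊤ : R) ≠ ⊥ := (MGAlgebra.bot_ne_top (C := R)).symm
    have hftop : f ⊤ = .top := by simp [hf, htb]
    have hfG : ∀ (x : R) (hb : x ≠ ⊥) (ht : x ≠ ⊤), f x = .of (φ ⟨x, hb, ht⟩) := by
      intro x hb ht
      simp [hf, hb, ht]
    have hφinj : ∀ (x y : R) (hx : x ∈ B) (hy : y ∈ B) (hxb : x ≠ ⊥) (hxt : x ≠ ⊤)
        (hyb : y ≠ ⊥) (hyt : y ≠ ⊤), x ≠ y → φ ⟨x, hxb, hxt⟩ ≠ φ ⟨y, hyb, hyt⟩ := by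
      intro x y hx hy hxb hxt hyb hyt hne heq
      exact hne (congrArg Subtype.val (hinj hx hy heq))
    have tri : ∀ x : R, x = ⊥ ∨ x = ⊤ ∨ (x ≠ ⊥ ∧ x ≠ ⊤) := by
      intro x; by_cases h : x = ⊥; · exact Or.inl h
      by_cases h' : x = ⊤; · exact Or.inr (Or.inl h')
      exact Or.inr (Or.inr ⟨h, h'⟩)
    have hfne : ∀ y : R, y ≠ ⊥ → f y ≠ .bot := by
      intro y hy
      rcases tri y with rfl | rfl | ⟨h1', h2'⟩
      · exact absurd rfl hy
      · rw [hftop]; simp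
      · rw [hfG y h1' h2']; simp
    refine ⟨MG H, MG.instMGAlgebra, f, MG.finite_mg, ?_, ?_, ?_, ?_, ?_, ?_⟩
    · -- injectivity
      intro x hx y hy heq
      rcases tri x with rfl | rfl | ⟨hxb, hxt⟩ <;> rcases tri y with rfl | rfl | ⟨hyb, hyt⟩
      · rfl
      · rw [hfbot, hftop] at heq; exact absurd heq (by simp)
      · rw [hfbot, hfG y hyb hyt] at heq; exact absurd heq (by simp)
      · rw [hftop, hfbot] at heq; exact absurd heq (by simp)
      · rfl
      · rw [hftop, hfG y hyb hyt] at heq; exact absurd heq (by simp)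
      · rw [hfG x hxb hxt, hfbot] at heq; exact absurd heq (by simp)
      · rw [hfG x hxb hxt, hftop] at heq; exact absurd heq (by simp)
      · rw [hfG x hxb hxt, hfG y hyb hyt] at heq
        simp only [MG.of.injEq] at heq
        by_contra hne
        exact hφinj x y hx hy hxb hxt hyb hyt hne heq
    · -- meet
      intro x hx y hy _
      rcases tri x with rfl | rfl | ⟨hxb, hxt⟩
      · simp [bot_inf_eq, hfbot, MG.inf_def]
      · simp [top_inf_eq, hftop, MG.inf_def]
      · rcases tri y with rfl | rfl | ⟨hyb, hyt⟩
        · simp [inf_bot_eq, hfbot, MG.inf_def]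
        · simp [inf_top_eq, hftop, MG.inf_def]
        · by_cases hxy : x = y
          · subst hxy
            simp [inf_idem, hfG x hxb hxt, MG.inf_def, MG.inf_of_of]
          · have h2 := (MGAlgebra.unilinear x y hxb hxt hyb hyt hxy).2
            have hφ := hφinj x y hx hy hxb hxt hyb hyt hxy
            rw [h2, hfbot, hfG x hxb hxt, hfG y hyb hyt, MG.inf_def, MG.inf_of_of, if_neg hφ]
    · -- join
      intro x hx y hy _
      rcases tri x with rfl | rfl | ⟨hxb, hxt⟩
      · simp [bot_sup_eq, hfbot, MG.sup_def]
      · simp [top_sup_eq, hftop, MG.sup_def]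
      · rcases tri y with rfl | rfl | ⟨hyb, hyt⟩
        · simp [sup_bot_eq, hfbot, MG.sup_def]
        · simp [sup_top_eq, hftop, MG.sup_def]
        · by_cases hxy : x = y
          · subst hxy
            simp [sup_idem, hfG x hxb hxt, MG.sup_def, MG.sup_of_of]
          · have h2 := (MGAlgebra.unilinear x y hxb hxt hyb hyt hxy).1
            have hφ := hφinj x y hx hy hxb hxt hyb hyt hxy
            rw [h2, hftop, hfG x hxb hxt, hfG y hyb hyt, MG.sup_def, MG.sup_of_of, if_neg hφ]
    · -- multiplication
      intro x hx y hy hmem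
      rcases tri x with rfl | rfl | ⟨hxb, hxt⟩
      · simp [MGAlgebra.bot_mul, hfbot, MG.mul_def]
      · rcases tri y with rfl | rfl | ⟨hyb, hyt⟩
        · simp [MGAlgebra.mul_bot, hfbot, MG.mul_def]
        · rw [MGAlgebra.top_absorb ⊤ htb, hftop, MG.mul_def, MG.mul_top_left (by simp)]
        · rw [MGAlgebra.top_absorb y hyb, hftop, MG.mul_def,
            MG.mul_top_left (hfne y hyb)]
      · rcases tri y with rfl | rfl | ⟨hyb, hyt⟩
        · simp [MGAlgebra.mul_bot, hfbot, MG.mul_def]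
        · rw [MGAlgebra.mul_top x hxb, hftop, MG.mul_def, MG.mul_top_right (hfne x hxb)]
        · have hcl := MGAlgebra.mul_closed x y hxb hxt hyb hyt
          have hmm := hmulφ ⟨x, hxb, hxt⟩ hx ⟨y, hyb, hyt⟩ hy (by
            show ((⟨x, hxb, hxt⟩ * ⟨y, hyb, hyt⟩ : {x : R // x ≠ ⊥ ∧ x ≠ ⊤}) : R) ∈ B
            exact hmem)
          rw [hfG (x * y) hcl.1 hcl.2, hfG x hxb hxt, hfG y hyb hyt, MG.mul_def, MG.mul_of_of]
          exact congrArg MG.of hmm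
    · -- left division
      intro x hx y hy hmem
      rcases tri x with rfl | rfl | ⟨hxb, hxt⟩
      · rw [MGAlgebra.ld_bot_left y, hftop, hfbot, MG.ld_def]; rfl
      · rcases tri y with rfl | rfl | ⟨hyb, hyt⟩
        · rw [MGAlgebra.ld_bot_right ⊤ htb, hfbot, hftop, MG.ld_def]; rfl
        · rw [MGAlgebra.ld_top_right ⊤, hftop, MG.ld_def]; rfl
        · rw [MGAlgebra.ld_top_left y hyt, hfbot, hftop, hfG y hyb hyt, MG.ld_def]; rfl
      · rcases tri y with rfl | rfl | ⟨hyb, hyt⟩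
        · rw [MGAlgebra.ld_bot_right x hxb, hfbot, hfG x hxb hxt, MG.ld_def]; rfl
        · rw [MGAlgebra.ld_top_right x, hftop, hfG x hxb hxt, MG.ld_def]; rfl
        · obtain ⟨i, hib, hit, hxi⟩ := MGAlgebra.invertible x hxb hxt
          have hld : MGAlgebra.ld x y = i * y :=
            MGAlgebra.ld_G hxb hxt hyb hyt hib hit hxi
          have hcl := MGAlgebra.mul_closed i y hib hit hyb hyt
          rw [hld] at hmem
          have hxiy : x * (i * y) = y := by rw [← mul_assoc, hxi, one_mul]
          have hsub : (⟨x, hxb, hxt⟩ * ⟨i * y, hcl.1, hcl.2⟩ : {x : R // x ≠ ⊥ ∧ x ≠ ⊤})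
              = ⟨y, hyb, hyt⟩ := Subtype.ext hxiy
          have hmm := hmulφ ⟨x, hxb, hxt⟩ hx ⟨i * y, hcl.1, hcl.2⟩ hmem (by rw [hsub]; exact hy)
          rw [hsub] at hmm
          rw [hld, hfG (i * y) hcl.1 hcl.2, hfG x hxb hxt, hfG y hyb hyt, MG.ld_def,
            MG.ld_of_of]
          exact congrArg MG.of (eq_inv_mul_iff_mul_eq.mpr hmm.symm)
    · -- one
      intro h1B
      rw [hfG 1 MGAlgebra.one_ne_bot h1]
      have h : φ ⟨1, MGAlgebra.one_ne_bot, h1⟩ = 1 := honeφ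
      rw [h]
      rfl
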